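/- Let Γ and Σ be finite graphs without isolated vertices. The Cartesian product Γ □ Σ is R-thick (has two distinct vertices with equal neighbourhoods) if and only if it contains a connected component which is a 4-cycle. -/
import Mathlib



def RThick {V : Type*} (G : SimpleGraph V) : Prop :=
  ∃ u v : V, u ≠ v ∧ G.neighborSet u = G.neighborSet v

/-- `G` has a connected component which is a 4-cycle: there are four distinct vertices
each of whose neighbourhood consists exactly of its two neighbours on the cycle. -/
def HasC4Component {V : Type*} (G : SimpleGraph V) : Prop :=
  ∃ a b c d : V, a ≠ b ∧ a ≠ c ∧ a ≠ d ∧ b ≠ c ∧ b ≠ d ∧ c ≠ d ∧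
    (∀ x, G.Adj a x ↔ x = b ∨ x = d) ∧
    (∀ x, G.Adj b x ↔ x = a ∨ x = c) ∧
    (∀ x, G.Adj c x ↔ x = b ∨ x = d) ∧
    (∀ x, G.Adj d x ↔ x = a ∨ x = c)

theorem stmt3 {V W : Type*} [Fintype V] [Fintype W]
    (G : SimpleGraph V) (H : SimpleGraph W)
    (hG : ∀ v : V, ∃ u, G.Adj v u) (hH : ∀ x : W, ∃ y, H.Adj x y) :
    RThick (G □ H) ↔ HasC4Component (G □ H) := by
  constructor
  · rintro ⟨⟨a, x⟩, ⟨b, y⟩, hne, hN⟩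
    have hA : ∀ p : V × W, (G □ H).Adj (a, x) p ↔ (G □ H).Adj (b, y) p := by
      intro p
      rw [← SimpleGraph.mem_neighborSet, ← SimpleGraph.mem_neighborSet, hN]
    have hab : a ≠ b := by
      intro h
      subst h
      have hxy : x ≠ y := fun h => hne (by simp [h])
      obtain ⟨a', ha'⟩ := hG a
      have := (hA (a', x)).mp (by simp [SimpleGraph.boxProd_adj, ha'])
      simp only [SimpleGraph.boxProd_adj] at this
      rcases this with ⟨_, h2⟩ | ⟨_, h2⟩
      · exact hxy h2.symm
      · exact ha'.ne h2
    have hxy : x ≠ y := by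
      intro h
      subst h
      obtain ⟨x', hx'⟩ := hH x
      have := (hA (a, x')).mp (by simp [SimpleGraph.boxProd_adj, hx'])
      simp only [SimpleGraph.boxProd_adj] at this
      rcases this with ⟨_, h2⟩ | ⟨_, h2⟩
      · exact hx'.ne h2
      · exact hab h2.symm
    have key1 : ∀ c, G.Adj a c → c = b ∧ H.Adj x y := by
      intro c hc
      have := (hA (c, x)).mp (by simp [SimpleGraph.boxProd_adj, hc])
      simp only [SimpleGraph.boxProd_adj] at this
      rcases this with ⟨_, h2⟩ | ⟨h1, h2⟩
      · exact absurd h2.symm hxy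
      · exact ⟨h2.symm, h1.symm⟩
    obtain ⟨a0, ha0⟩ := hG a
    have hGab : G.Adj a b := (key1 a0 ha0).1 ▸ ha0
    have hHxy : H.Adj x y := (key1 a0 ha0).2
    have key2 : ∀ c, G.Adj b c → c = a := by
      intro c hc
      have := (hA (c, y)).mpr (by simp [SimpleGraph.boxProd_adj, hc])
      simp only [SimpleGraph.boxProd_adj] at this
      rcases this with ⟨_, h2⟩ | ⟨_, h2⟩
      · exact absurd h2 hxy
      · exact h2.symm
    have key3 : ∀ z, H.Adj x z → z = y := by
      intro z hz
      have := (hA (a, z)).mp (by simp [SimpleGraph.boxProd_adj, hz])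
      simp only [SimpleGraph.boxProd_adj] at this
      rcases this with ⟨_, h2⟩ | ⟨_, h2⟩
      · exact h2.symm
      · exact absurd h2.symm hab
    have key4 : ∀ z, H.Adj y z → z = x := by
      intro z hz
      have := (hA (b, z)).mpr (by simp [SimpleGraph.boxProd_adj, hz])
      simp only [SimpleGraph.boxProd_adj] at this
      rcases this with ⟨_, h2⟩ | ⟨_, h2⟩
      · exact h2.symm
      · exact absurd h2 hab
    have key1' : ∀ c, G.Adj a c → c = b := fun c hc => (key1 c hc).1
    refine ⟨(a, x), (b, x), (b, y), (a, y), ?_, ?_, ?_, ?_, ?_, ?_, ?_, ?_, ?_, ?_⟩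
    · simp [hab]
    · simp [hab, hxy]
    · simp [hxy]
    · simp [hxy]
    · simp [hab, hxy]
    · simp [hab.symm]
    · rintro ⟨c, z⟩
      simp only [SimpleGraph.boxProd_adj, Prod.mk.injEq]
      constructor
      · rintro (⟨h1, h2⟩ | ⟨h1, h2⟩)
        · exact Or.inl ⟨key1' c h1, h2.symm⟩
        · exact Or.inr ⟨h2.symm, key3 z h1⟩
      · rintro (⟨h1, h2⟩ | ⟨h1, h2⟩)
        · subst h1; subst h2; exact Or.inl ⟨hGab, rfl⟩
        · subst h1; subst h2; exact Or.inr ⟨hHxy, rfl⟩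
    · rintro ⟨c, z⟩
      simp only [SimpleGraph.boxProd_adj, Prod.mk.injEq]
      constructor
      · rintro (⟨h1, h2⟩ | ⟨h1, h2⟩)
        · exact Or.inl ⟨key2 c h1, h2.symm⟩
        · exact Or.inr ⟨h2.symm, key3 z h1⟩
      · rintro (⟨h1, h2⟩ | ⟨h1, h2⟩)
        · subst h1; subst h2; exact Or.inl ⟨hGab.symm, rfl⟩
        · subst h1; subst h2; exact Or.inr ⟨hHxy, rfl⟩
    · rintro ⟨c, z⟩
      simp only [SimpleGraph.boxProd_adj, Prod.mk.injEq]
      constructor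
      · rintro (⟨h1, h2⟩ | ⟨h1, h2⟩)
        · exact Or.inr ⟨key2 c h1, h2.symm⟩
        · exact Or.inl ⟨h2.symm, key4 z h1⟩
      · rintro (⟨h1, h2⟩ | ⟨h1, h2⟩)
        · subst h1; subst h2; exact Or.inr ⟨hHxy.symm, rfl⟩
        · subst h1; subst h2; exact Or.inl ⟨hGab.symm, rfl⟩
    · rintro ⟨c, z⟩
      simp only [SimpleGraph.boxProd_adj, Prod.mk.injEq]
      constructor
      · rintro (⟨h1, h2⟩ | ⟨h1, h2⟩)
        · exact Or.inr ⟨key1' c h1, h2.symm⟩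
        · exact Or.inl ⟨h2.symm, key4 z h1⟩
      · rintro (⟨h1, h2⟩ | ⟨h1, h2⟩)
        · subst h1; subst h2; exact Or.inr ⟨hHxy.symm, rfl⟩
        · subst h1; subst h2; exact Or.inl ⟨hGab, rfl⟩
  · rintro ⟨a, b, c, d, hab, hac, had, hbc, hbd, hcd, ha, hb, hc, hd⟩
    refine ⟨a, c, hac, ?_⟩
    ext p
    simp only [SimpleGraph.mem_neighborSet, ha p, hc p]
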